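/- Let f be a set of natural numbers, d > 0 a real constant, c > 0, and suppose there is a constant C₀ > 0 such that |π_f(x) − d·∫_2^x dt/ln t| ≤ C₀·x·exp(−c·√(ln x)) for all x ≥ 2. Then there is a constant C > 0 such that for all x ≥ 2: |∑_{p prime, p ≤ x, p ∈ f} (ln p)/p − d·ln x| ≤ C. -/

import Mathlib

open Filter

/-- `primeCountIn f t` is the number of primes `p ≤ t` with `p ∈ f`. -/
noncomputable def primeCountIn (f : Set ℕ) (t : ℝ) : ℕ :=
  {p : ℕ | p.Prime ∧ p ∈ f ∧ (p : ℝ) ≤ t}.ncard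

open scoped Classical in
/-- `primeSumIn f g x` is the sum of `g p` over primes `p ≤ x` with `p ∈ f`. -/
noncomputable def primeSumIn (f : Set ℕ) (g : ℝ → ℝ) (x : ℝ) : ℝ :=
  ∑ p ∈ (Finset.range (⌊x⌋₊ + 1)).filter (fun p => p.Prime ∧ p ∈ f), g p


open MeasureTheory intervalIntegral

open scoped Classical in
noncomputable def cfAux (f : Set ℕ) : ℕ → ℝ :=
  fun k => if k.Prime ∧ k ∈ f then 1 else 0

lemma cfAux_nonneg (f : Set ℕ) (k : ℕ) : 0 ≤ cfAux f k := by
  unfold cfAux; split <;> norm_num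

lemma cfAux_zero (f : Set ℕ) : cfAux f 0 = 0 := by
  simp [cfAux, Nat.not_prime_zero]

lemma cfAux_one (f : Set ℕ) : cfAux f 1 = 0 := by
  simp [cfAux, Nat.not_prime_one]

lemma primeCountIn_eq (f : Set ℕ) {t : ℝ} (ht : 0 ≤ t) :
    (primeCountIn f t : ℝ) = ∑ k ∈ Finset.Icc 0 ⌊t⌋₊, cfAux f k := by
  classical
  unfold primeCountIn cfAux
  rw [Finset.sum_boole]
  norm_num
  have : {p : ℕ | p.Prime ∧ p ∈ f ∧ (p : ℝ) ≤ t} =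
      ↑((Finset.Icc 0 ⌊t⌋₊).filter (fun p => p.Prime ∧ p ∈ f)) := by
    ext p
    simp only [Set.mem_setOf_eq, Finset.coe_filter, Finset.mem_Icc, Nat.le_floor_iff ht]
    constructor
    · rintro ⟨h1, h2, h3⟩; exact ⟨⟨Nat.zero_le _, h3⟩, h1, h2⟩
    · rintro ⟨⟨-, h3⟩, h1, h2⟩; exact ⟨h1, h2, h3⟩
  rw [this, Set.ncard_coe_finset]

lemma primeSumIn_eq (f : Set ℕ) (x : ℝ) :
    primeSumIn f (fun t => Real.log t / t) x =
      ∑ k ∈ Finset.Icc 0 ⌊x⌋₊, (Real.log k / k) * cfAux f k := by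
  classical
  unfold primeSumIn cfAux
  rw [show Finset.range (⌊x⌋₊ + 1) = Finset.Icc 0 ⌊x⌋₊ by
    rw [Finset.range_eq_Ico, Finset.Ico_add_one_right_eq_Icc]]
  rw [Finset.sum_filter]
  refine Finset.sum_congr rfl fun k _ => ?_
  split <;> simp


lemma exp_aux {c u : ℝ} (hc : 0 < c) (hu : 0 < u) :
    Real.exp (-c * Real.sqrt u) ≤ 46656 / (c ^ 6 * u ^ 3) := by
  set v := c * Real.sqrt u with hv
  have hvpos : 0 < v := mul_pos hc (Real.sqrt_pos.mpr hu)
  have h1 : (v / 6) ^ 6 ≤ Real.exp v := by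
    calc (v / 6) ^ 6 ≤ (1 + v / 6) ^ 6 := by
          apply pow_le_pow_left₀ (by positivity); linarith
      _ ≤ (Real.exp (v / 6)) ^ 6 := by
          apply pow_le_pow_left₀ (by positivity)
          linarith [Real.add_one_le_exp (v / 6)]
      _ = Real.exp v := by rw [← Real.exp_nat_mul]; norm_num; ring_nf
  have hv6 : v ^ 6 = c ^ 6 * u ^ 3 := by
    rw [hv, mul_pow, show (Real.sqrt u) ^ 6 = ((Real.sqrt u) ^ 2) ^ 3 by ring,
      Real.sq_sqrt hu.le]
  have hve : -c * Real.sqrt u = -v := by rw [hv]; ring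
  rw [hve, Real.exp_neg, ← hv6]
  rw [inv_le_comm₀ (Real.exp_pos _) (by positivity)] at *
  have : v ^ 6 / 46656 ≤ Real.exp v := by
    have := h1; rw [div_pow] at this; norm_num at this; linarith
  rw [inv_div]
  linarith

lemma hasDerivAt_lt {t : ℝ} (ht : t ≠ 0) :
    HasDerivAt (fun t => Real.log t / t) ((1 - Real.log t) / t ^ 2) t := by
  have h := (Real.hasDerivAt_log ht).div (hasDerivAt_id t) ht
  refine h.congr_deriv ?_
  simp only [id]
  field_simp

lemma hasDerivAt_invlog {t : ℝ} (ht : t ≠ 0) (hlt : Real.log t ≠ 0) :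
    HasDerivAt (fun t => -(Real.log t)⁻¹) (1 / (t * (Real.log t) ^ 2)) t := by
  have h := ((Real.hasDerivAt_log ht).inv hlt).neg
  refine h.congr_deriv ?_
  field_simp
set_option maxHeartbeats 1000000 in
open MeasureTheory intervalIntegral in
theorem stmt9 (f : Set ℕ) (d : ℝ) (hd : 0 < d) (c : ℝ) (hc : 0 < c)
    (C₀ : ℝ) (hC₀ : 0 < C₀)
    (hpi : ∀ x : ℝ, 2 ≤ x →
      |(primeCountIn f x : ℝ) - d * ∫ t in (2 : ℝ)..x, 1 / Real.log t| ≤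
        C₀ * x * Real.exp (-c * Real.sqrt (Real.log x))) :
    ∃ C : ℝ, 0 < C ∧ ∀ x : ℝ, 2 ≤ x →
      |primeSumIn f (fun t => Real.log t / t) x - d * Real.log x| ≤ C := by
  classical
  have hlog2 : 0 < Real.log 2 := Real.log_pos one_lt_two
  have hlog2' : (1:ℝ)/2 ≤ Real.log 2 := by
    have := Real.log_two_gt_d9; linarith
  set K : ℝ := 46656 / c ^ 6 with hK
  have hKpos : 0 < K := by positivity
  refine ⟨C₀ * K / (Real.log 2)^2 + d * Real.log 2 + 3 * C₀ * K / Real.log 2 + 1, by positivity, ?_⟩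
  intro x hx
  have hx0 : (0:ℝ) < x := by linarith
  have hx1 : (1:ℝ) ≤ x := by linarith
  have hlx : Real.log 2 ≤ Real.log x := Real.log_le_log (by norm_num) hx
  have hlx0 : 0 < Real.log x := lt_of_lt_of_le hlog2 hlx
  -- notation
  set g : ℝ → ℝ := fun t => Real.log t / t with hgdef
  set φ : ℝ → ℝ := fun t => (1 - Real.log t) / t ^ 2 with hφdef
  set A : ℝ → ℝ := fun t => ∑ k ∈ Finset.Icc 0 ⌊t⌋₊, cfAux f k with hAdef
  set L : ℝ → ℝ := fun t => ∫ s in (2:ℝ)..t, 1 / Real.log s with hLdef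
  have hgd : ∀ t : ℝ, t ≠ 0 → HasDerivAt g (φ t) t := fun t ht => hasDerivAt_lt ht
  have hderiv_eq : ∀ t : ℝ, t ≠ 0 → deriv g t = φ t := fun t ht => (hgd t ht).deriv
  -- continuity of φ
  have hφcont : ContinuousOn φ (Set.Ici (1:ℝ)) := by
    apply ContinuousOn.div
    · refine continuousOn_const.sub (Real.continuousOn_log.mono ?_)
      intro t ht
      simp only [Set.mem_compl_iff, Set.mem_singleton_iff]
      intro h
      rw [h] at ht
      simp only [Set.mem_Ici] at ht
      linarith
    · exact (continuous_pow 2).continuousOn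
    · intro t ht
      have : (1:ℝ) ≤ t := ht
      positivity
  have hg_diff : ∀ t ∈ Set.Icc (1:ℝ) x, DifferentiableAt ℝ g t := fun t ht =>
    (hgd t (by have := ht.1; intro h; rw [h] at this; linarith)).differentiableAt
  have hg_int : IntegrableOn (deriv g) (Set.Icc 1 x) := by
    have h1 : IntegrableOn φ (Set.Icc 1 x) :=
      (hφcont.mono (Set.Icc_subset_Ici_self)).integrableOn_Icc
    exact h1.congr_fun
      (fun t ht => (hderiv_eq t (by have := ht.1; intro h; rw [h] at this; linarith)).symm)
      measurableSet_Icc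
  -- Abel summation
  have habel := sum_mul_eq_sub_integral_mul₀ (f := g) (cfAux f) (cfAux_zero f) x hg_diff hg_int
  -- A facts
  have hA_nonneg : ∀ t, 0 ≤ A t := fun t => Finset.sum_nonneg fun k _ => cfAux_nonneg f k
  have hA_mono : ∀ s t : ℝ, s ≤ t → A s ≤ A t := fun s t hst =>
    Finset.sum_le_sum_of_subset_of_nonneg
      (Finset.Icc_subset_Icc le_rfl (Nat.floor_le_floor hst)) (fun k _ _ => cfAux_nonneg f k)
  have hA_meas : Measurable A := by
    have h : A = (fun n : ℕ => ∑ k ∈ Finset.Icc 0 n, cfAux f k) ∘ Nat.floor := rfl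
    rw [h]
    exact measurable_from_top.comp Nat.measurable_floor
  -- integrability of deriv g * A
  have hFint : IntegrableOn (fun t => deriv g t * A t) (Set.Icc 1 x) := by
    apply Integrable.mono' (hg_int.abs.mul_const (A x))
    · exact ((measurable_deriv g).mul hA_meas).aestronglyMeasurable
    · rw [ae_restrict_iff' measurableSet_Icc]
      filter_upwards with t ht
      rw [norm_mul, Real.norm_eq_abs, Real.norm_eq_abs, abs_of_nonneg (hA_nonneg t)]
      exact mul_le_mul_of_nonneg_left (hA_mono t x ht.2) (abs_nonneg _)
  have hFi12 : IntervalIntegrable (fun t => deriv g t * A t) volume 1 2 :=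
    (intervalIntegrable_iff_integrableOn_Icc_of_le (by norm_num)).mpr
      (hFint.mono_set (Set.Icc_subset_Icc le_rfl hx))
  have hFi2x : IntervalIntegrable (fun t => deriv g t * A t) volume 2 x :=
    (intervalIntegrable_iff_integrableOn_Icc_of_le hx).mpr
      (hFint.mono_set (Set.Icc_subset_Icc (by norm_num) le_rfl))
  -- integral over (1,2] vanishes
  have hI12 : ∫ t in (1:ℝ)..2, deriv g t * A t = 0 := by
    rw [integral_of_le (by norm_num : (1:ℝ) ≤ 2)]
    have h2 : ∀ᵐ t : ℝ, t ∉ ({2} : Set ℝ) :=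
      MeasureTheory.measure_eq_zero_iff_ae_notMem.mp Real.volume_singleton
    have h0 : ∀ᵐ t ∂(volume.restrict (Set.Ioc (1:ℝ) 2)), deriv g t * A t = 0 := by
      rw [MeasureTheory.ae_restrict_iff' measurableSet_Ioc]
      filter_upwards [h2] with t h2t ht
      have h1t : 1 < t := ht.1
      have ht2 : t < 2 := lt_of_le_of_ne ht.2 (by simpa using h2t)
      have hfl : ⌊t⌋₊ = 1 := by
        rw [Nat.floor_eq_iff (by linarith)]
        constructor <;> push_cast <;> linarith
      have hA0 : A t = 0 := by
        show (∑ k ∈ Finset.Icc 0 ⌊t⌋₊, cfAux f k) = 0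
        rw [hfl, show Finset.Icc 0 1 = ({0, 1} : Finset ℕ) by rfl]
        simp [cfAux_zero, cfAux_one]
      rw [hA0, mul_zero]
    exact MeasureTheory.integral_eq_zero_of_ae h0
  -- split the integral
  have hsplit : ∫ t in Set.Ioc (1:ℝ) x, deriv g t * A t =
      ∫ t in (2:ℝ)..x, deriv g t * A t := by
    rw [← integral_of_le hx1, ← integral_add_adjacent_intervals hFi12 hFi2x, hI12, zero_add]
  have hφA : ∫ t in (2:ℝ)..x, deriv g t * A t = ∫ t in (2:ℝ)..x, φ t * A t := by
    apply integral_congr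
    intro t ht
    rw [Set.uIcc_of_le hx] at ht
    show deriv g t * A t = φ t * A t
    rw [hderiv_eq t (by have := ht.1; intro h; rw [h] at this; linarith)]
  -- derivative of L
  have hlogne : ∀ t : ℝ, 2 ≤ t → Real.log t ≠ 0 :=
    fun t ht => ne_of_gt (Real.log_pos (by linarith))
  have hcont_invlog : ContinuousOn (fun s => 1 / Real.log s) (Set.Ici (2:ℝ)) := by
    apply ContinuousOn.div continuousOn_const
    · refine Real.continuousOn_log.mono ?_
      intro s hs
      simp only [Set.mem_compl_iff, Set.mem_singleton_iff]
      intro h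
      rw [h] at hs
      simp only [Set.mem_Ici] at hs
      linarith
    · exact fun s hs => hlogne s hs
  have hmeas_invlog : Measurable (fun s : ℝ => 1 / Real.log s) :=
    measurable_const.div Real.measurable_log
  have hL_deriv : ∀ t ∈ Set.Icc (2:ℝ) x, HasDerivAt L (1 / Real.log t) t := by
    intro t ht
    apply intervalIntegral.integral_hasDerivAt_right
    · apply (hcont_invlog.mono ?_).intervalIntegrable
      rw [Set.uIcc_of_le ht.1]
      exact fun s hs => hs.1
    · exact ⟨Set.univ, Filter.univ_mem, hmeas_invlog.aestronglyMeasurable⟩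
    · exact ContinuousAt.div continuousAt_const
        (Real.continuousAt_log (by have := ht.1; intro h; rw [h] at this; linarith))
        (hlogne t ht.1)
  have hLcont : ContinuousOn L (Set.Icc (2:ℝ) x) :=
    fun t ht => (hL_deriv t ht).differentiableAt.continuousAt.continuousWithinAt
  have hL2 : L 2 = 0 := integral_same
  -- interval integrabilities on [2,x]
  have hφ_ii : IntervalIntegrable φ volume 2 x := by
    apply (hφcont.mono ?_).intervalIntegrable
    rw [Set.uIcc_of_le hx]
    exact fun s hs => le_trans (by norm_num) hs.1
  have hinvlog_ii : IntervalIntegrable (fun s : ℝ => 1 / Real.log s) volume 2 x := by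
    apply (hcont_invlog.mono ?_).intervalIntegrable
    rw [Set.uIcc_of_le hx]
    exact fun s hs => hs.1
  have hφA_ii : IntervalIntegrable (fun t => φ t * A t) volume 2 x := by
    rw [intervalIntegrable_iff_integrableOn_Icc_of_le hx]
    refine (((intervalIntegrable_iff_integrableOn_Icc_of_le hx).mp hFi2x)).congr_fun ?_
      measurableSet_Icc
    intro t ht
    simp only
    rw [hderiv_eq t (by have := ht.1; intro h; rw [h] at this; linarith)]
  have hφL_ii : IntervalIntegrable (fun t => φ t * L t) volume 2 x := by
    apply ContinuousOn.intervalIntegrable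
    rw [Set.uIcc_of_le hx]
    exact ((hφcont.mono (fun s hs => le_trans (by norm_num) hs.1)).mul hLcont)
  have hφE_ii : IntervalIntegrable (fun t => φ t * (A t - d * L t)) volume 2 x := by
    have h := hφA_ii.sub (hφL_ii.const_mul d)
    have heq : (fun t => φ t * A t - d * (φ t * L t)) =
        fun t => φ t * (A t - d * L t) := by funext t; ring
    rwa [heq] at h
  -- integration by parts
  have hparts := intervalIntegral.integral_mul_deriv_eq_deriv_mul
    (u := g) (u' := φ) (v := L) (v' := fun t => 1 / Real.log t)
    (fun t ht => hgd t (by rw [Set.uIcc_of_le hx] at ht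
                           have := ht.1; intro h; rw [h] at this; linarith))
    (fun t ht => hL_deriv t (by rwa [Set.uIcc_of_le hx] at ht))
    hφ_ii hinvlog_ii
  have hlhs : ∫ t in (2:ℝ)..x, g t * (1 / Real.log t) = Real.log x - Real.log 2 := by
    rw [integral_congr (g := fun t : ℝ => 1 / t) ?_]
    · rw [integral_one_div ?_, Real.log_div (by linarith) (by norm_num)]
      rw [Set.uIcc_of_le hx]
      intro h0
      have := h0.1
      linarith
    · intro t ht
      rw [Set.uIcc_of_le hx] at ht
      have ht2 := ht.1
      have ht0 : t ≠ 0 := by intro h; rw [h] at ht2; linarith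
      show Real.log t / t * (1 / Real.log t) = 1 / t
      have hlt := hlogne t ht2
      field_simp
  have hφL_eq : ∫ t in (2:ℝ)..x, φ t * L t =
      g x * L x - (Real.log x - Real.log 2) := by
    rw [← hlhs, hparts, hL2]
    ring
  -- the error integral bound
  have hb : ∀ t ∈ Set.Icc (2:ℝ) x,
      |φ t * (A t - d * L t)| ≤ 3 * C₀ * K * (1 / (t * (Real.log t) ^ 2)) := by
    intro t ht
    obtain ⟨ht2, htx⟩ := ht
    have ht0 : (0:ℝ) < t := by linarith
    have hut : Real.log 2 ≤ Real.log t := Real.log_le_log (by norm_num) ht2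
    have hu0 : 0 < Real.log t := lt_of_lt_of_le hlog2 hut
    have hcount : A t = (primeCountIn f t : ℝ) := (primeCountIn_eq f (by linarith)).symm
    have hE1 : |A t - d * L t| ≤ C₀ * t * Real.exp (-c * Real.sqrt (Real.log t)) := by
      rw [hcount]; exact hpi t ht2
    have hexp : Real.exp (-c * Real.sqrt (Real.log t)) ≤ 46656 / (c ^ 6 * (Real.log t) ^ 3) :=
      exp_aux hc hu0
    have hφb : |φ t| ≤ 3 * Real.log t / t ^ 2 := by
      show |(1 - Real.log t) / t ^ 2| ≤ 3 * Real.log t / t ^ 2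
      rw [abs_div, abs_of_nonneg (by positivity : (0:ℝ) ≤ t ^ 2)]
      apply div_le_div_of_nonneg_right ?_ (by positivity)
      apply abs_le.mpr
      constructor <;> linarith
    calc |φ t * (A t - d * L t)| = |φ t| * |A t - d * L t| := abs_mul _ _
      _ ≤ (3 * Real.log t / t ^ 2) * (C₀ * t * (46656 / (c ^ 6 * (Real.log t) ^ 3))) := by
          apply mul_le_mul hφb ?_ (abs_nonneg _) (by positivity)
          exact hE1.trans (mul_le_mul_of_nonneg_left hexp (by positivity))
      _ = 3 * C₀ * K * (1 / (t * (Real.log t) ^ 2)) := by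
          rw [hK]
          field_simp
  have hbig_ii : IntervalIntegrable
      (fun t : ℝ => 3 * C₀ * K * (1 / (t * (Real.log t) ^ 2))) volume 2 x := by
    apply ContinuousOn.intervalIntegrable
    rw [Set.uIcc_of_le hx]
    apply ContinuousOn.mul continuousOn_const
    apply ContinuousOn.div continuousOn_const
    · apply ContinuousOn.mul (continuousOn_id)
      apply ContinuousOn.pow
      refine Real.continuousOn_log.mono ?_
      intro s hs
      simp only [Set.mem_compl_iff, Set.mem_singleton_iff]
      intro h
      rw [h] at hs
      have := hs.1
      norm_num at this
    · intro t ht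
      have ht2 := ht.1
      have : 0 < Real.log t := Real.log_pos (by linarith)
      positivity
  have hbigval : ∫ t in (2:ℝ)..x, 3 * C₀ * K * (1 / (t * (Real.log t) ^ 2)) =
      3 * C₀ * K * ((Real.log 2)⁻¹ - (Real.log x)⁻¹) := by
    rw [intervalIntegral.integral_const_mul]
    congr 1
    have hder : ∀ t ∈ Set.uIcc (2:ℝ) x,
        HasDerivAt (fun t => -(Real.log t)⁻¹) (1 / (t * (Real.log t) ^ 2)) t := by
      intro t ht
      rw [Set.uIcc_of_le hx] at ht
      have ht2 := ht.1
      exact hasDerivAt_invlog (by intro h; rw [h] at ht2; linarith) (hlogne t ht2)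
    have hii : IntervalIntegrable (fun t : ℝ => 1 / (t * (Real.log t) ^ 2)) volume 2 x := by
      apply ContinuousOn.intervalIntegrable
      rw [Set.uIcc_of_le hx]
      apply ContinuousOn.div continuousOn_const
      · apply ContinuousOn.mul continuousOn_id
        apply ContinuousOn.pow
        refine Real.continuousOn_log.mono ?_
        intro s hs
        simp only [Set.mem_compl_iff, Set.mem_singleton_iff]
        intro h
        rw [h] at hs
        have := hs.1
        norm_num at this
      · intro t ht
        have ht2 := ht.1
        have : 0 < Real.log t := Real.log_pos (by linarith)
        positivity
    rw [integral_eq_sub_of_hasDerivAt hder hii]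
    ring
  have habs : |∫ t in (2:ℝ)..x, φ t * (A t - d * L t)| ≤ 3 * C₀ * K / Real.log 2 := by
    have h1 := intervalIntegral.abs_integral_le_integral_abs (μ := volume)
      (f := fun t => φ t * (A t - d * L t)) hx
    have h2 : ∫ t in (2:ℝ)..x, |φ t * (A t - d * L t)| ≤
        ∫ t in (2:ℝ)..x, 3 * C₀ * K * (1 / (t * (Real.log t) ^ 2)) :=
      integral_mono_on hx hφE_ii.abs hbig_ii hb
    have h3 : 3 * C₀ * K * ((Real.log 2)⁻¹ - (Real.log x)⁻¹) ≤ 3 * C₀ * K / Real.log 2 := by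
      rw [div_eq_mul_inv]
      have : 0 < (Real.log x)⁻¹ := by positivity
      nlinarith [mul_pos (show (0:ℝ) < 3 * C₀ * K by positivity) this]
    rw [hbigval] at h2
    linarith
  -- bound on the boundary term
  have hgE : |g x * (A x - d * L x)| ≤ C₀ * K / (Real.log 2) ^ 2 := by
    have hcount : A x = (primeCountIn f x : ℝ) := (primeCountIn_eq f (by linarith)).symm
    have hE1 : |A x - d * L x| ≤ C₀ * x * Real.exp (-c * Real.sqrt (Real.log x)) := by
      rw [hcount]; exact hpi x hx
    have hexp : Real.exp (-c * Real.sqrt (Real.log x)) ≤ 46656 / (c ^ 6 * (Real.log x) ^ 3) :=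
      exp_aux hc hlx0
    have hgx : |g x| = Real.log x / x := by
      show |Real.log x / x| = Real.log x / x
      exact abs_of_nonneg (by positivity)
    rw [abs_mul, hgx]
    calc Real.log x / x * |A x - d * L x|
        ≤ Real.log x / x * (C₀ * x * (46656 / (c ^ 6 * (Real.log x) ^ 3))) := by
          apply mul_le_mul_of_nonneg_left ?_ (by positivity)
          exact hE1.trans (mul_le_mul_of_nonneg_left hexp (by positivity))
      _ = C₀ * K / (Real.log x) ^ 2 := by
          rw [hK]
          field_simp
      _ ≤ C₀ * K / (Real.log 2) ^ 2 := by
          apply div_le_div_of_nonneg_left (by positivity) (by positivity)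
          apply pow_le_pow_left₀ hlog2.le hlx
  -- assembly
  have hkey : primeSumIn f (fun t => Real.log t / t) x - d * Real.log x =
      g x * (A x - d * L x) - d * Real.log 2 -
        ∫ t in (2:ℝ)..x, φ t * (A t - d * L t) := by
    rw [primeSumIn_eq]
    have hsum : (∑ k ∈ Finset.Icc 0 ⌊x⌋₊, Real.log (k : ℝ) / (k : ℝ) * cfAux f k) =
        ∑ k ∈ Finset.Icc 0 ⌊x⌋₊, g (k : ℝ) * cfAux f k := rfl
    rw [hsum, habel, hsplit, hφA]
    have hEint : ∫ t in (2:ℝ)..x, φ t * A t =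
        d * (∫ t in (2:ℝ)..x, φ t * L t) + ∫ t in (2:ℝ)..x, φ t * (A t - d * L t) := by
      rw [← intervalIntegral.integral_const_mul, ← intervalIntegral.integral_add (hφL_ii.const_mul d) hφE_ii]
      apply integral_congr
      intro t _
      show φ t * A t = d * (φ t * L t) + φ t * (A t - d * L t)
      ring
    rw [hEint, hφL_eq]
    show g x * A x - (d * (g x * L x - (Real.log x - Real.log 2)) + _) - d * Real.log x = _
    ring
  rw [hkey]
  have htri : |g x * (A x - d * L x) - d * Real.log 2 -
      ∫ t in (2:ℝ)..x, φ t * (A t - d * L t)| ≤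
      |g x * (A x - d * L x)| + d * Real.log 2 +
      |∫ t in (2:ℝ)..x, φ t * (A t - d * L t)| := by
    have h1 := abs_sub (g x * (A x - d * L x) - d * Real.log 2)
      (∫ t in (2:ℝ)..x, φ t * (A t - d * L t))
    have h2 := abs_sub (g x * (A x - d * L x)) (d * Real.log 2)
    have h3 : |d * Real.log 2| = d * Real.log 2 := abs_of_nonneg (by positivity)
    rw [h3] at h2
    linarith
  linarith [hgE, habs, htri]
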